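/- For Algorithm-1 iterates with a saddle point (φ*, q*, μ*) of L, p* = Bφ*, b* = q*, step size 0 < ρ < (2rs² + s)/(1 + rs)², and B injective with closed range: if G is uniformly convex on bounded subsets of V, then φⁿ → φ* strongly in V, Bφⁿ → Bφ* and pⁿ → Bφ* strongly in H; if moreover F is uniformly convex on bounded subsets of H, then qⁿ → q* and bⁿ → q* strongly in H. -/

import Mathlib

open RealInnerProductSpace Filter Topology

/-- `u` is a subgradient of `J` at `x`. -/
def IsSubgradient {E : Type*} [NormedAddCommGroup E] [InnerProductSpace ℝ E]
    (J : E → ℝ) (x u : E) : Prop :=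
  ∀ z, J z ≥ J x + ⟪u, z - x⟫

/-- `J` is uniformly convex on the set `U`. -/
def UniformlyConvexOnSet {E : Type*} [NormedAddCommGroup E] [InnerProductSpace ℝ E]
    (J : E → ℝ) (U : Set E) : Prop :=
  ∃ Ψ : ℝ → ℝ, StrictMonoOn Ψ (Set.Ici 0) ∧ Ψ 0 = 0 ∧ (∀ t, 0 ≤ t → 0 ≤ Ψ t) ∧
    ∀ x ∈ U, ∀ y ∈ U, ∀ u v : E, IsSubgradient J x u → IsSubgradient J y v →
      ⟪u - v, x - y⟫ ≥ Ψ ‖x - y‖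

/-- `J` is uniformly convex on every bounded subset of its domain. -/
def UniformlyConvexOnBoundedSets {E : Type*} [NormedAddCommGroup E] [InnerProductSpace ℝ E]
    (J : E → ℝ) : Prop :=
  ∀ U : Set E, Bornology.IsBounded U → UniformlyConvexOnSet J U

lemma subgrad_mono' {E : Type*} [NormedAddCommGroup E] [InnerProductSpace ℝ E]
    {J : E → ℝ} {x y u v : E} (hu : IsSubgradient J x u) (hv : IsSubgradient J y v) :
    0 ≤ ⟪u - v, x - y⟫ := by
  have h1 := hu y
  have h2 := hv x
  have e1 : ⟪u, y - x⟫ = -⟪u, x - y⟫ := by rw [← inner_neg_right]; congr 1; abel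
  rw [inner_sub_left]
  rw [e1] at h1
  linarith

lemma inner_comb {E : Type*} [NormedAddCommGroup E] [InnerProductSpace ℝ E]
    (X Y Z M : E) (s : ℝ) :
    ⟪X - s • Y - s • Z, M⟫ = ⟪M, X⟫ - s * ⟪M, Y⟫ - s * ⟪M, Z⟫ := by
  rw [inner_sub_left, inner_sub_left, real_inner_smul_left, real_inner_smul_left,
    real_inner_comm X M, real_inner_comm Y M, real_inner_comm Z M]

lemma psi_tendsto (Ψ : ℝ → ℝ) (hmono : StrictMonoOn Ψ (Set.Ici 0)) (h0 : Ψ 0 = 0)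
    (t : ℕ → ℝ) (ht : ∀ n, 0 ≤ t n) (hΨt : Tendsto (fun n => Ψ (t n)) atTop (nhds 0)) :
    Tendsto t atTop (nhds 0) := by
  rw [Metric.tendsto_atTop]
  intro ε hε
  have hΨε : 0 < Ψ ε := by
    rw [← h0]
    exact hmono (Set.mem_Ici.2 le_rfl) (Set.mem_Ici.2 hε.le) hε
  rw [Metric.tendsto_atTop] at hΨt
  obtain ⟨N, hN⟩ := hΨt (Ψ ε) hΨε
  refine ⟨N, fun n hn => ?_⟩
  have h1 := hN n hn
  rw [Real.dist_eq, sub_zero] at h1 ⊢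
  rw [abs_of_nonneg (ht n)]
  by_contra hcon
  push_neg at hcon
  have : Ψ ε ≤ Ψ (t n) :=
    hmono.monotoneOn (Set.mem_Ici.2 hε.le) (Set.mem_Ici.2 (ht n)) hcon
  have h2 : Ψ (t n) ≤ |Ψ (t n)| := le_abs_self _
  linarith

lemma bdd_below_of_inj {V H : Type*} [NormedAddCommGroup V] [InnerProductSpace ℝ V]
    [CompleteSpace V] [NormedAddCommGroup H] [InnerProductSpace ℝ H] [CompleteSpace H]
    (B : V →L[ℝ] H) (hBinj : Function.Injective B) (hBrange : IsClosed (Set.range B)) :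
    ∃ c : ℝ, 0 < c ∧ ∀ v : V, ‖v‖ ≤ c * ‖B v‖ := by
  have hcr : IsClosed (LinearMap.range (B : V →ₗ[ℝ] H) : Set H) := by
    convert hBrange using 1
    exact LinearMap.coe_range _
  haveI : CompleteSpace (LinearMap.range (B : V →ₗ[ℝ] H)) := hcr.completeSpace_coe
  set B' : V →L[ℝ] (LinearMap.range (B : V →ₗ[ℝ] H)) := B.codRestrict (LinearMap.range (B : V →ₗ[ℝ] H))
    (fun v => LinearMap.mem_range_self _ v) with hB'
  have hinj : Function.Injective B' := by
    intro a b hab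
    apply hBinj
    have := congrArg (Subtype.val) hab
    simpa [B'] using this
  have hsurj : Function.Surjective B' := by
    rintro ⟨x, hx⟩
    obtain ⟨v, hv⟩ := hx
    exact ⟨v, Subtype.ext hv⟩
  let e : V ≃L[ℝ] (LinearMap.range (B : V →ₗ[ℝ] H)) := ContinuousLinearEquiv.ofBijective B'
    (LinearMap.ker_eq_bot.2 hinj) (LinearMap.range_eq_top.2 hsurj)
  obtain ⟨c, hc, hlip⟩ : ∃ c : ℝ, 0 < c ∧ ∀ y, ‖e.symm y‖ ≤ c * ‖y‖ := by
    refine ⟨max 1 ‖(e.symm : (LinearMap.range (B : V →ₗ[ℝ] H)) →L[ℝ] V)‖, by positivity, fun y => ?_⟩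
    calc ‖e.symm y‖ ≤ ‖(e.symm : (LinearMap.range (B : V →ₗ[ℝ] H)) →L[ℝ] V)‖ * ‖y‖ :=
          (e.symm : (LinearMap.range (B : V →ₗ[ℝ] H)) →L[ℝ] V).le_opNorm y
      _ ≤ _ := by
          apply mul_le_mul_of_nonneg_right (le_max_right _ _) (norm_nonneg _)
  refine ⟨c, hc, fun v => ?_⟩
  have h1 : e.symm (B' v) = v := by
    have : B' v = e v := rfl
    rw [this, e.symm_apply_apply]
  have h2 : ‖(B' v : H)‖ = ‖B v‖ := by simp [B']
  calc ‖v‖ = ‖e.symm (B' v)‖ := by rw [h1]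
    _ ≤ c * ‖B' v‖ := hlip _
    _ = c * ‖B v‖ := by rw [← h2]; rfl

lemma step_ineq {E : Type*} [NormedAddCommGroup E] [InnerProductSpace ℝ E]
    (s r ρ : ℝ) (hs : 0 < s) (hρ : 0 < ρ)
    (M A C N0 E0 P Q : E) (gB gC : ℝ)
    (hA : 0 ≤ ⟪M, P - Q⟫ - s * ⟪M, M - N0⟫ - s * ⟪M, M - E0⟫)
    (hB : gB ≤ -⟪(M + s⁻¹ • A) + r • A, A + P⟫)
    (hC : gC ≤ ⟪(M + s⁻¹ • C) + r • C, Q - C⟫) :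
    s/2 * (‖M + s⁻¹ • A‖^2 + ‖M + s⁻¹ • C‖^2)
      + 1/(2*ρ) * (‖P + (ρ*(r+1/s)) • A‖^2 + ‖Q - (ρ*(r+1/s)) • C‖^2)
      + ((r+1/s)*(1-(ρ*(r+1/s))/2) - 1/(2*s)) * (‖A‖^2 + ‖C‖^2) + gB + gC
    ≤ s/2 * (‖N0‖^2 + ‖E0‖^2) + 1/(2*ρ) * (‖P‖^2 + ‖Q‖^2) := by
  have hsq1 : (0:ℝ) ≤ 1/(2*s) * ‖A - s • ((M + s⁻¹ • A) - N0)‖^2 := by positivity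
  have hsq2 : (0:ℝ) ≤ 1/(2*s) * ‖C - s • ((M + s⁻¹ • C) - E0)‖^2 := by positivity
  have key : s/2 * (‖N0‖^2 + ‖E0‖^2) + 1/(2*ρ) * (‖P‖^2 + ‖Q‖^2)
      - (s/2 * (‖M + s⁻¹ • A‖^2 + ‖M + s⁻¹ • C‖^2)
        + 1/(2*ρ) * (‖P + (ρ*(r+1/s)) • A‖^2 + ‖Q - (ρ*(r+1/s)) • C‖^2)
        + ((r+1/s)*(1-(ρ*(r+1/s))/2) - 1/(2*s)) * (‖A‖^2 + ‖C‖^2))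
      = (⟪M, P - Q⟫ - s * ⟪M, M - N0⟫ - s * ⟪M, M - E0⟫)
        + (-⟪(M + s⁻¹ • A) + r • A, A + P⟫) + (⟪(M + s⁻¹ • C) + r • C, Q - C⟫)
        + 1/(2*s) * ‖A - s • ((M + s⁻¹ • A) - N0)‖^2
        + 1/(2*s) * ‖C - s • ((M + s⁻¹ • C) - E0)‖^2 := by
    simp only [← real_inner_self_eq_norm_sq]
    simp only [inner_add_left, inner_add_right, inner_sub_left, inner_sub_right,
      real_inner_smul_left, real_inner_smul_right]
    simp only [real_inner_comm A M, real_inner_comm C M, real_inner_comm N0 M,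
      real_inner_comm E0 M, real_inner_comm P M, real_inner_comm Q M,
      real_inner_comm C A, real_inner_comm N0 A, real_inner_comm E0 A,
      real_inner_comm P A, real_inner_comm Q A, real_inner_comm N0 C,
      real_inner_comm E0 C, real_inner_comm P C, real_inner_comm Q C,
      real_inner_comm E0 N0, real_inner_comm P N0, real_inner_comm Q N0,
      real_inner_comm P E0, real_inner_comm Q E0, real_inner_comm Q P]
    field_simp
    ring
  linarith

set_option maxHeartbeats 2000000

theorem algorithm1_strong_convergence
    {V H : Type*} [NormedAddCommGroup V] [InnerProductSpace ℝ V] [CompleteSpace V]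
    [NormedAddCommGroup H] [InnerProductSpace ℝ H] [CompleteSpace H]
    (B : V →L[ℝ] H) (F : H → ℝ) (G : V → ℝ) (I : H → ℝ)
    (hFconv : ConvexOn ℝ Set.univ F) (hFlsc : LowerSemicontinuous F)
    (hGconv : ConvexOn ℝ Set.univ G) (hGlsc : LowerSemicontinuous G)
    (hIconv : ConvexOn ℝ Set.univ I) (hIlsc : LowerSemicontinuous I)
    (L : V → H → H → ℝ)
    (hL : ∀ (φ' : V) (q' μ' : H), L φ' q' μ' = F q' + G φ' - I μ' + ⟪μ', B φ' - q'⟫)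
    (r s ρ : ℝ) (hr : 0 < r) (hs : 0 < s)
    (hρ1 : 0 < ρ) (hρ2 : ρ < (2*r*s^2 + s) / (1 + r*s)^2)
    (φs : V) (qs μs : H) (ps bs : H) (hps : ps = B φs) (hbs : bs = qs)
    (hsaddle : ∀ (φ' : V) (q' μ' : H), L φs qs μ' ≤ L φs qs μs ∧ L φs qs μs ≤ L φ' q' μs)
    (φ : ℕ → V) (q μ p b ν η : ℕ → H)
    (hi : ∀ n, 1 ≤ n → ∀ μ' : H,
      I μ' - I (μ n) + ⟪μ n - μ', p n - b n⟫ - s * ⟪μ n - μ', μ n - ν (n-1)⟫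
        - s * ⟪μ n - μ', μ n - η (n-1)⟫ ≥ 0)
    (hii : ∀ n, 1 ≤ n →
      ν n = s⁻¹ • (B (φ n) - p n) + μ n ∧ η n = s⁻¹ • (b n - q n) + μ n)
    (hiii : ∀ n, 1 ≤ n → ∀ φ' : V,
      G φ' - G (φ n) + ⟪ν n + r • (B (φ n) - p n), B φ' - B (φ n)⟫ ≥ 0)
    (hiv : ∀ n, 1 ≤ n → ∀ q' : H,
      F q' - F (q n) + ⟪η n + r • (b n - q n), q n - q'⟫ ≥ 0)
    (hv : ∀ n, 1 ≤ n →
      p (n+1) = p n + (ρ * (r + 1/s)) • (B (φ n) - p n) ∧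
      b (n+1) = b n - (ρ * (r + 1/s)) • (b n - q n))
    (hBinj : Function.Injective B) (hBrange : IsClosed (Set.range B)) :
    UniformlyConvexOnBoundedSets G →
      (Tendsto φ atTop (nhds φs) ∧
       Tendsto (fun n => B (φ n)) atTop (nhds (B φs)) ∧
       Tendsto p atTop (nhds (B φs)) ∧
       (UniformlyConvexOnBoundedSets F →
         Tendsto q atTop (nhds qs) ∧ Tendsto b atTop (nhds qs))) := by
  intro hGuc
  obtain ⟨c, hc, hcB⟩ := bdd_below_of_inj B hBinj hBrange
  -- positivity of delta
  have hδpos : 0 < (r+1/s)*(1-(ρ*(r+1/s))/2) - 1/(2*s) := by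
    have h1 : (0:ℝ) < (1+r*s)^2 := by positivity
    have h2 : ρ * (1+r*s)^2 < 2*r*s^2 + s := (lt_div_iff₀ h1).mp hρ2
    have key : (r+1/s)*(1-(ρ*(r+1/s))/2) - 1/(2*s)
        = (2*r*s^2 + s - ρ*(1+r*s)^2)/(2*s^2) := by field_simp; ring
    rw [key]
    apply div_pos (by linarith) (by positivity)
  set δ : ℝ := (r+1/s)*(1-(ρ*(r+1/s))/2) - 1/(2*s) with hδ
  -- saddle point conditions
  have hSG : ∀ φ' : V, 0 ≤ G φ' - G φs + ⟪μs, B φ' - B φs⟫ := by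
    intro φ'
    have h := (hsaddle φ' qs μs).2
    rw [hL, hL] at h
    simp only [inner_sub_right] at h ⊢
    linarith
  have hSF : ∀ q' : H, 0 ≤ F q' - F qs + ⟪μs, qs - q'⟫ := by
    intro q'
    have h := (hsaddle φs q' μs).2
    rw [hL, hL] at h
    simp only [inner_sub_right] at h ⊢
    linarith
  have hSI : ∀ μ' : H, 0 ≤ I μ' - I μs + ⟪μs - μ', B φs - qs⟫ := by
    intro μ'
    have h := (hsaddle φs qs μ').1
    rw [hL, hL] at h
    simp only [inner_sub_left] at h ⊢
    linarith
  -- subgradients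
  have hus : IsSubgradient G φs (-(B.adjoint μs)) := by
    intro z
    have h := hSG z
    have e : ⟪-(B.adjoint μs), z - φs⟫ = -⟪μs, B z - B φs⟫ := by
      rw [inner_neg_left, ContinuousLinearMap.adjoint_inner_left, map_sub]
    rw [ge_iff_le, e]
    linarith
  have hu : ∀ m, 1 ≤ m →
      IsSubgradient G (φ m) (-(B.adjoint (ν m + r • (B (φ m) - p m)))) := by
    intro m hm z
    have h := hiii m hm z
    have e : ⟪-(B.adjoint (ν m + r • (B (φ m) - p m))), z - φ m⟫
        = -⟪ν m + r • (B (φ m) - p m), B z - B (φ m)⟫ := by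
      rw [inner_neg_left, ContinuousLinearMap.adjoint_inner_left, map_sub]
    rw [ge_iff_le, e]
    linarith
  have hvs : IsSubgradient F qs μs := by
    intro z
    have h := hSF z
    simp only [inner_sub_right] at h ⊢
    linarith
  have hvq : ∀ m, 1 ≤ m → IsSubgradient F (q m) (η m + r • (b m - q m)) := by
    intro m hm z
    have h := hiv m hm z
    simp only [inner_sub_right] at h ⊢
    linarith
  have hws : IsSubgradient I μs (ps - bs) := by
    intro z
    have h := hSI z
    have e : ⟪ps - bs, z - μs⟫ = -⟪μs - z, B φs - qs⟫ := by
      rw [hps, hbs, real_inner_comm, ← neg_sub μs z, inner_neg_left]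
    rw [ge_iff_le, e]
    linarith
  have hw : ∀ m, 1 ≤ m → IsSubgradient I (μ m)
      ((p m - b m) - s • (μ m - ν (m-1)) - s • (μ m - η (m-1))) := by
    intro m hm z
    have h := hi m hm z
    have e : ⟪(p m - b m) - s • (μ m - ν (m-1)) - s • (μ m - η (m-1)), z - μ m⟫
        = -(⟪μ m - z, p m - b m⟫ - s * ⟪μ m - z, μ m - ν (m-1)⟫
            - s * ⟪μ m - z, μ m - η (m-1)⟫) := by
      rw [inner_comb, ← neg_sub (μ m) z, inner_neg_left, inner_neg_left, inner_neg_left]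
      ring
    rw [ge_iff_le, e]
    linarith
  -- the energy
  set EN : ℕ → ℝ := fun m => s/2 * (‖ν m - μs‖^2 + ‖η m - μs‖^2)
      + 1/(2*ρ) * (‖p (m+1) - ps‖^2 + ‖b (m+1) - bs‖^2) with hEN
  have hENnonneg : ∀ m, 0 ≤ EN m := by
    intro m; simp only [hEN]; positivity
  -- the master step inequality
  have hstep : ∀ k : ℕ, ∀ gB gC : ℝ,
      gB ≤ ⟪(-(B.adjoint (ν (k+2) + r • (B (φ (k+2)) - p (k+2))))) - (-(B.adjoint μs)),
            φ (k+2) - φs⟫ →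
      gC ≤ ⟪(η (k+2) + r • (b (k+2) - q (k+2))) - μs, q (k+2) - qs⟫ →
      EN (k+2) + δ * (‖B (φ (k+2)) - p (k+2)‖^2 + ‖b (k+2) - q (k+2)‖^2) + gB + gC
        ≤ EN (k+1) := by
    intro k gB gC hgB hgC
    have hn1 : 1 ≤ k+2 := by omega
    have hm1 : 1 ≤ k+1 := by omega
    have hidx : (k+2) - 1 = k+1 := rfl
    obtain ⟨hνn, hηn⟩ := hii (k+2) hn1
    obtain ⟨hp', hb'⟩ := hv (k+2) hn1
    -- hypothesis A from monotonicity of subgradients of I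
    have monoI := subgrad_mono' (hw (k+2) hn1) hws
    rw [hidx] at monoI
    have hAvec : (p (k+2) - b (k+2)) - s • (μ (k+2) - ν (k+1)) - s • (μ (k+2) - η (k+1))
        - (ps - bs)
        = ((p (k+2) - ps) - (b (k+2) - bs))
          - s • ((μ (k+2) - μs) - (ν (k+1) - μs))
          - s • ((μ (k+2) - μs) - (η (k+1) - μs)) := by module
    have hA : 0 ≤ ⟪μ (k+2) - μs, (p (k+2) - ps) - (b (k+2) - bs)⟫
        - s * ⟪μ (k+2) - μs, (μ (k+2) - μs) - (ν (k+1) - μs)⟫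
        - s * ⟪μ (k+2) - μs, (μ (k+2) - μs) - (η (k+1) - μs)⟫ := by
      calc (0:ℝ) ≤ _ := monoI
        _ = _ := by rw [hAvec, inner_comb]
    -- hypothesis B from hgB
    have harg : ((μ (k+2) - μs) + s⁻¹ • (B (φ (k+2)) - p (k+2)))
          + r • (B (φ (k+2)) - p (k+2))
        = (ν (k+2) + r • (B (φ (k+2)) - p (k+2))) - μs := by
      rw [hνn]; module
    have hBv : (-(B.adjoint (ν (k+2) + r • (B (φ (k+2)) - p (k+2))))) - (-(B.adjoint μs))
        = -(B.adjoint (((μ (k+2) - μs) + s⁻¹ • (B (φ (k+2)) - p (k+2)))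
            + r • (B (φ (k+2)) - p (k+2)))) := by
      rw [harg, map_sub]; module
    have hAP : (B (φ (k+2)) - p (k+2)) + (p (k+2) - ps) = B (φ (k+2) - φs) := by
      rw [map_sub, ← hps]; module
    have hB : gB ≤ -⟪((μ (k+2) - μs) + s⁻¹ • (B (φ (k+2)) - p (k+2)))
          + r • (B (φ (k+2)) - p (k+2)),
        (B (φ (k+2)) - p (k+2)) + (p (k+2) - ps)⟫ := by
      calc gB ≤ _ := hgB
        _ = _ := by
          rw [hBv, inner_neg_left, ContinuousLinearMap.adjoint_inner_left, hAP]
    -- hypothesis C from hgC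
    have he5 : ((μ (k+2) - μs) + s⁻¹ • (b (k+2) - q (k+2))) + r • (b (k+2) - q (k+2))
        = (η (k+2) + r • (b (k+2) - q (k+2))) - μs := by
      rw [hηn]; module
    have he6 : (b (k+2) - bs) - (b (k+2) - q (k+2)) = q (k+2) - qs := by
      rw [hbs]; module
    have hC : gC ≤ ⟪((μ (k+2) - μs) + s⁻¹ • (b (k+2) - q (k+2)))
          + r • (b (k+2) - q (k+2)), (b (k+2) - bs) - (b (k+2) - q (k+2))⟫ := by
      rw [he5, he6]; exact hgC
    have key := step_ineq s r ρ hs hρ1 (μ (k+2) - μs) (B (φ (k+2)) - p (k+2))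
      (b (k+2) - q (k+2)) (ν (k+1) - μs) (η (k+1) - μs) (p (k+2) - ps) (b (k+2) - bs)
      gB gC hA hB hC
    have e1 : (μ (k+2) - μs) + s⁻¹ • (B (φ (k+2)) - p (k+2)) = ν (k+2) - μs := by
      rw [hνn]; module
    have e2 : (μ (k+2) - μs) + s⁻¹ • (b (k+2) - q (k+2)) = η (k+2) - μs := by
      rw [hηn]; module
    have e3 : (p (k+2) - ps) + (ρ*(r+1/s)) • (B (φ (k+2)) - p (k+2))
        = p (k+2+1) - ps := by rw [hp']; module
    have e4 : (b (k+2) - bs) - (ρ*(r+1/s)) • (b (k+2) - q (k+2))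
        = b (k+2+1) - bs := by rw [hb']; module
    rw [e1, e2, e3, e4] at key
    simp only [hEN, hδ]
    have hidx2 : k+1+1 = k+2 := rfl
    rw [hidx2]
    linarith
  -- monotonicity facts
  have hmonoG : ∀ k : ℕ, (0:ℝ) ≤ ⟪(-(B.adjoint (ν (k+2) + r • (B (φ (k+2)) - p (k+2)))))
      - (-(B.adjoint μs)), φ (k+2) - φs⟫ :=
    fun k => subgrad_mono' (hu (k+2) (by omega)) hus
  have hmonoF : ∀ k : ℕ, (0:ℝ) ≤ ⟪(η (k+2) + r • (b (k+2) - q (k+2))) - μs,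
      q (k+2) - qs⟫ :=
    fun k => subgrad_mono' (hvq (k+2) (by omega)) hvs
  have hdec : ∀ k, EN (k+2)
      + δ * (‖B (φ (k+2)) - p (k+2)‖^2 + ‖b (k+2) - q (k+2)‖^2) ≤ EN (k+1) := by
    intro k
    have := hstep k 0 0 (hmonoG k) (hmonoF k)
    linarith
  have hterm_nonneg : ∀ k, (0:ℝ) ≤ δ * (‖B (φ (k+2)) - p (k+2)‖^2
      + ‖b (k+2) - q (k+2)‖^2) := by
    intro k
    apply mul_nonneg hδpos.le
    positivity
  have hanti : Antitone (fun k => EN (k+1)) := by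
    apply antitone_nat_of_succ_le
    intro k
    have h1 := hdec k
    have h2 := hterm_nonneg k
    have hidx : k+1+1 = k+2 := rfl
    show EN (k+1+1) ≤ EN (k+1)
    rw [hidx]
    linarith only [h1, h2]
  have hbdd : BddBelow (Set.range (fun k => EN (k+1))) := by
    refine ⟨0, ?_⟩
    rintro x ⟨k, rfl⟩
    exact hENnonneg (k+1)
  have hDlim : Tendsto (fun k => EN (k+1)) atTop (nhds (⨅ k, EN (k+1))) :=
    tendsto_atTop_ciInf hanti hbdd
  have hDlim1 : Tendsto (fun k => EN (k+1+1)) atTop (nhds (⨅ k, EN (k+1))) :=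
    hDlim.comp (tendsto_add_atTop_nat 1)
  have hgap : Tendsto (fun k => EN (k+1) - EN (k+2)) atTop (nhds 0) := by
    have h := hDlim.sub hDlim1
    rw [sub_self] at h
    exact h
  have hENle : ∀ k, EN (k+1) ≤ EN 1 := fun k => hanti (Nat.zero_le k)
  -- norm bounds
  have hAb : ∀ k, ‖B (φ (k+2)) - p (k+2)‖^2 ≤ EN 1 / δ := by
    intro k
    rw [le_div_iff₀ hδpos]
    have h1 := hdec k
    have h2 := hENnonneg (k+2)
    have h3 := hENle k
    nlinarith [mul_nonneg hδpos.le (sq_nonneg ‖b (k+2) - q (k+2)‖)]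
  have hCb : ∀ k, ‖b (k+2) - q (k+2)‖^2 ≤ EN 1 / δ := by
    intro k
    rw [le_div_iff₀ hδpos]
    have h1 := hdec k
    have h2 := hENnonneg (k+2)
    have h3 := hENle k
    nlinarith [mul_nonneg hδpos.le (sq_nonneg ‖B (φ (k+2)) - p (k+2)‖)]
  have hENunfold : ∀ k, EN (k+1) = s/2 * (‖ν (k+1) - μs‖^2 + ‖η (k+1) - μs‖^2)
      + 1/(2*ρ) * (‖p (k+2) - ps‖^2 + ‖b (k+2) - bs‖^2) := by
    intro k
    simp only [hEN]
  have hPb : ∀ k, ‖p (k+2) - ps‖^2 ≤ 2*ρ*EN 1 := by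
    intro k
    have h3 := hENle k
    rw [hENunfold k] at h3
    have hx : (0:ℝ) ≤ s/2 * (‖ν (k+1) - μs‖^2 + ‖η (k+1) - μs‖^2) := by positivity
    have hy : (0:ℝ) ≤ 1/(2*ρ) * ‖b (k+2) - bs‖^2 := by positivity
    have h4 : 1/(2*ρ) * ‖p (k+2) - ps‖^2 ≤ EN 1 := by nlinarith
    have h5 : ‖p (k+2) - ps‖^2 = 2*ρ*(1/(2*ρ) * ‖p (k+2) - ps‖^2) := by
      field_simp
    rw [h5]
    exact mul_le_mul_of_nonneg_left h4 (by positivity)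
  have hQb : ∀ k, ‖b (k+2) - bs‖^2 ≤ 2*ρ*EN 1 := by
    intro k
    have h3 := hENle k
    rw [hENunfold k] at h3
    have hx : (0:ℝ) ≤ s/2 * (‖ν (k+1) - μs‖^2 + ‖η (k+1) - μs‖^2) := by positivity
    have hy : (0:ℝ) ≤ 1/(2*ρ) * ‖p (k+2) - ps‖^2 := by positivity
    have h4 : 1/(2*ρ) * ‖b (k+2) - bs‖^2 ≤ EN 1 := by nlinarith
    have h5 : ‖b (k+2) - bs‖^2 = 2*ρ*(1/(2*ρ) * ‖b (k+2) - bs‖^2) := by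
      field_simp
    rw [h5]
    exact mul_le_mul_of_nonneg_left h4 (by positivity)
  -- boundedness of φ
  have hφb : ∀ k, ‖φ (k+2) - φs‖
      ≤ c * (Real.sqrt (EN 1/δ) + Real.sqrt (2*ρ*EN 1)) := by
    intro k
    have h1 : ‖B (φ (k+2)) - p (k+2)‖ ≤ Real.sqrt (EN 1/δ) := by
      have h := Real.sqrt_le_sqrt (hAb k)
      rwa [Real.sqrt_sq (norm_nonneg _)] at h
    have h2 : ‖p (k+2) - ps‖ ≤ Real.sqrt (2*ρ*EN 1) := by
      have h := Real.sqrt_le_sqrt (hPb k)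
      rwa [Real.sqrt_sq (norm_nonneg _)] at h
    have h3 : B (φ (k+2) - φs) = (B (φ (k+2)) - p (k+2)) + (p (k+2) - ps) := by
      rw [map_sub, hps]; module
    calc ‖φ (k+2) - φs‖ ≤ c * ‖B (φ (k+2) - φs)‖ := hcB _
      _ = c * ‖(B (φ (k+2)) - p (k+2)) + (p (k+2) - ps)‖ := by rw [h3]
      _ ≤ c * (Real.sqrt (EN 1/δ) + Real.sqrt (2*ρ*EN 1)) := by
          apply mul_le_mul_of_nonneg_left _ hc.le
          calc ‖(B (φ (k+2)) - p (k+2)) + (p (k+2) - ps)‖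
              ≤ ‖B (φ (k+2)) - p (k+2)‖ + ‖p (k+2) - ps‖ := norm_add_le _ _
            _ ≤ _ := add_le_add h1 h2
  have hRVnn : 0 ≤ c * (Real.sqrt (EN 1/δ) + Real.sqrt (2*ρ*EN 1)) := by
    apply mul_nonneg hc.le
    positivity
  obtain ⟨ΨG, hΨmono, hΨ0, hΨnn, hΨkey⟩ :=
    hGuc (Metric.closedBall φs (c * (Real.sqrt (EN 1/δ) + Real.sqrt (2*ρ*EN 1))))
      Metric.isBounded_closedBall
  have hφU : ∀ k, φ (k+2) ∈ Metric.closedBall φs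
      (c * (Real.sqrt (EN 1/δ) + Real.sqrt (2*ρ*EN 1))) := by
    intro k
    rw [Metric.mem_closedBall, dist_eq_norm]
    exact hφb k
  have hφsU : φs ∈ Metric.closedBall φs
      (c * (Real.sqrt (EN 1/δ) + Real.sqrt (2*ρ*EN 1))) :=
    Metric.mem_closedBall_self hRVnn
  have hgB : ∀ k, ΨG ‖φ (k+2) - φs‖
      ≤ ⟪(-(B.adjoint (ν (k+2) + r • (B (φ (k+2)) - p (k+2)))))
          - (-(B.adjoint μs)), φ (k+2) - φs⟫ :=
    fun k => hΨkey _ (hφU k) _ hφsU _ _ (hu (k+2) (by omega)) hus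
  have hstepG : ∀ k, ΨG ‖φ (k+2) - φs‖ ≤ EN (k+1) - EN (k+2) := by
    intro k
    have h := hstep k (ΨG ‖φ (k+2) - φs‖) 0 (hgB k) (hmonoF k)
    have h2 := hterm_nonneg k
    linarith
  have hΨtends : Tendsto (fun k => ΨG ‖φ (k+2) - φs‖) atTop (nhds 0) := by
    apply tendsto_of_tendsto_of_tendsto_of_le_of_le tendsto_const_nhds hgap
    · intro k; exact hΨnn _ (norm_nonneg _)
    · intro k; exact hstepG k
  have hφnorm : Tendsto (fun k => ‖φ (k+2) - φs‖) atTop (nhds 0) :=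
    psi_tendsto ΨG hΨmono hΨ0 _ (fun k => norm_nonneg _) hΨtends
  have hφshift : Tendsto (fun k => φ (k+2)) atTop (nhds φs) := by
    rw [tendsto_iff_norm_sub_tendsto_zero]
    exact hφnorm
  have hφlim : Tendsto φ atTop (nhds φs) := by
    rw [← tendsto_add_atTop_iff_nat 2]
    exact hφshift
  have hBφlim : Tendsto (fun n => B (φ n)) atTop (nhds (B φs)) :=
    (B.continuous.tendsto φs).comp hφlim
  -- B φ n - p n tends to zero
  have hAtends : Tendsto (fun n => B (φ n) - p n) atTop (nhds 0) := by
    have hsq : Tendsto (fun k => δ * ‖B (φ (k+2)) - p (k+2)‖^2) atTop (nhds 0) := by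
      apply tendsto_of_tendsto_of_tendsto_of_le_of_le tendsto_const_nhds hgap
      · intro k; exact mul_nonneg hδpos.le (sq_nonneg _)
      · intro k
        have h := hdec k
        show δ * ‖B (φ (k+2)) - p (k+2)‖^2 ≤ EN (k+1) - EN (k+2)
        nlinarith [mul_nonneg hδpos.le (sq_nonneg ‖b (k+2) - q (k+2)‖)]
    have h2 : Tendsto (fun k => ‖B (φ (k+2)) - p (k+2)‖^2) atTop (nhds 0) := by
      have h := hsq.const_mul δ⁻¹
      simp only [← mul_assoc, inv_mul_cancel₀ (ne_of_gt hδpos), one_mul, mul_zero] at h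
      exact h
    have h3 : Tendsto (fun k => ‖B (φ (k+2)) - p (k+2)‖) atTop (nhds 0) := by
      have h := (Real.continuous_sqrt.tendsto 0).comp h2
      have heq : (fun k => Real.sqrt (‖B (φ (k+2)) - p (k+2)‖^2))
          = fun k => ‖B (φ (k+2)) - p (k+2)‖ :=
        funext fun k => Real.sqrt_sq (norm_nonneg _)
      rw [show (Real.sqrt ∘ fun k => ‖B (φ (k+2)) - p (k+2)‖^2)
          = fun k => Real.sqrt (‖B (φ (k+2)) - p (k+2)‖^2) from rfl, heq,
        Real.sqrt_zero] at h
      exact h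
    have h4 : Tendsto (fun k => B (φ (k+2)) - p (k+2)) atTop (nhds 0) :=
      tendsto_zero_iff_norm_tendsto_zero.2 h3
    rw [← tendsto_add_atTop_iff_nat 2]
    exact h4
  have hplim : Tendsto p atTop (nhds (B φs)) := by
    have h := hBφlim.sub hAtends
    simp only [sub_sub_cancel, sub_zero] at h
    exact h
  refine ⟨hφlim, hBφlim, hplim, ?_⟩
  -- now F uniformly convex
  intro hFuc
  have hqb : ∀ k, ‖q (k+2) - qs‖ ≤ Real.sqrt (2*ρ*EN 1) + Real.sqrt (EN 1/δ) := by
    intro k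
    have h1 : ‖b (k+2) - bs‖ ≤ Real.sqrt (2*ρ*EN 1) := by
      have h := Real.sqrt_le_sqrt (hQb k)
      rwa [Real.sqrt_sq (norm_nonneg _)] at h
    have h2 : ‖b (k+2) - q (k+2)‖ ≤ Real.sqrt (EN 1/δ) := by
      have h := Real.sqrt_le_sqrt (hCb k)
      rwa [Real.sqrt_sq (norm_nonneg _)] at h
    have h3 : q (k+2) - qs = (b (k+2) - bs) - (b (k+2) - q (k+2)) := by
      rw [hbs]; module
    calc ‖q (k+2) - qs‖ = ‖(b (k+2) - bs) - (b (k+2) - q (k+2))‖ := by rw [h3]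
      _ ≤ ‖b (k+2) - bs‖ + ‖b (k+2) - q (k+2)‖ := norm_sub_le _ _
      _ ≤ _ := add_le_add h1 h2
  have hRHnn : 0 ≤ Real.sqrt (2*ρ*EN 1) + Real.sqrt (EN 1/δ) := by positivity
  obtain ⟨ΨF, hΨFmono, hΨF0, hΨFnn, hΨFkey⟩ :=
    hFuc (Metric.closedBall qs (Real.sqrt (2*ρ*EN 1) + Real.sqrt (EN 1/δ)))
      Metric.isBounded_closedBall
  have hqU : ∀ k, q (k+2) ∈ Metric.closedBall qs
      (Real.sqrt (2*ρ*EN 1) + Real.sqrt (EN 1/δ)) := by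
    intro k
    rw [Metric.mem_closedBall, dist_eq_norm]
    exact hqb k
  have hqsU : qs ∈ Metric.closedBall qs
      (Real.sqrt (2*ρ*EN 1) + Real.sqrt (EN 1/δ)) :=
    Metric.mem_closedBall_self hRHnn
  have hgC : ∀ k, ΨF ‖q (k+2) - qs‖
      ≤ ⟪(η (k+2) + r • (b (k+2) - q (k+2))) - μs, q (k+2) - qs⟫ :=
    fun k => hΨFkey _ (hqU k) _ hqsU _ _ (hvq (k+2) (by omega)) hvs
  have hstepF : ∀ k, ΨF ‖q (k+2) - qs‖ ≤ EN (k+1) - EN (k+2) := by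
    intro k
    have h := hstep k 0 (ΨF ‖q (k+2) - qs‖) (hmonoG k) (hgC k)
    have h2 := hterm_nonneg k
    linarith
  have hΨFtends : Tendsto (fun k => ΨF ‖q (k+2) - qs‖) atTop (nhds 0) := by
    apply tendsto_of_tendsto_of_tendsto_of_le_of_le tendsto_const_nhds hgap
    · intro k; exact hΨFnn _ (norm_nonneg _)
    · intro k; exact hstepF k
  have hqnorm : Tendsto (fun k => ‖q (k+2) - qs‖) atTop (nhds 0) :=
    psi_tendsto ΨF hΨFmono hΨF0 _ (fun k => norm_nonneg _) hΨFtends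
  have hqshift : Tendsto (fun k => q (k+2)) atTop (nhds qs) := by
    rw [tendsto_iff_norm_sub_tendsto_zero]
    exact hqnorm
  have hqlim : Tendsto q atTop (nhds qs) := by
    rw [← tendsto_add_atTop_iff_nat 2]
    exact hqshift
  -- b n - q n tends to zero
  have hCtends : Tendsto (fun n => b n - q n) atTop (nhds 0) := by
    have hsq : Tendsto (fun k => δ * ‖b (k+2) - q (k+2)‖^2) atTop (nhds 0) := by
      apply tendsto_of_tendsto_of_tendsto_of_le_of_le tendsto_const_nhds hgap
      · intro k; exact mul_nonneg hδpos.le (sq_nonneg _)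
      · intro k
        have h := hdec k
        show δ * ‖b (k+2) - q (k+2)‖^2 ≤ EN (k+1) - EN (k+2)
        nlinarith [mul_nonneg hδpos.le (sq_nonneg ‖B (φ (k+2)) - p (k+2)‖)]
    have h2 : Tendsto (fun k => ‖b (k+2) - q (k+2)‖^2) atTop (nhds 0) := by
      have h := hsq.const_mul δ⁻¹
      simp only [← mul_assoc, inv_mul_cancel₀ (ne_of_gt hδpos), one_mul, mul_zero] at h
      exact h
    have h3 : Tendsto (fun k => ‖b (k+2) - q (k+2)‖) atTop (nhds 0) := by
      have h := (Real.continuous_sqrt.tendsto 0).comp h2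
      have heq : (fun k => Real.sqrt (‖b (k+2) - q (k+2)‖^2))
          = fun k => ‖b (k+2) - q (k+2)‖ :=
        funext fun k => Real.sqrt_sq (norm_nonneg _)
      rw [show (Real.sqrt ∘ fun k => ‖b (k+2) - q (k+2)‖^2)
          = fun k => Real.sqrt (‖b (k+2) - q (k+2)‖^2) from rfl, heq,
        Real.sqrt_zero] at h
      exact h
    have h4 : Tendsto (fun k => b (k+2) - q (k+2)) atTop (nhds 0) :=
      tendsto_zero_iff_norm_tendsto_zero.2 h3
    rw [← tendsto_add_atTop_iff_nat 2]
    exact h4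
  have hblim : Tendsto b atTop (nhds qs) := by
    have h := hqlim.add hCtends
    have heq : (fun n => q n + (b n - q n)) = b := funext fun n => by abel
    rw [heq, add_zero] at h
    exact h
  exact ⟨hqlim, hblim⟩
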